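/- Let φ : ℂ³ → ℂ⁶ be given by φ(x,y,z) = (x²y, x²z, xy², y²z, xz², yz²) (the Togliatti parametrization, coordinates u₀,…,u₅ corresponding to x²y, x²z, y²x, y²z, z²x, z²y). Then the vanishing ideal in ℂ[u₀,…,u₅] of the image set {φ(x,y,z) : (x,y,z) ∈ ℂ³} ⊆ ℂ⁶ (equivalently, the homogeneous ideal I(X_T) of the affine cone over the Togliatti surface X_T ⊂ ℙ⁵) is generated by the nine polynomials u₂u₄ − u₀u₅, u₁u₃ − u₀u₅, u₃u₄² − u₁u₅², u₀u₄² − u₁²u₅, u₃²u₄ − u₂u₅², u₀u₃u₄ − u₁u₂u₅, u₀u₃² − u₂²u₅, u₁u₂² − u₀²u₃, u₁²u₂ − u₀²u₄. -/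

import Mathlib

open MvPolynomial

/-- The affine Togliatti parametrization φ(x,y,z) = (x²y, x²z, xy², y²z, xz², yz²). -/
noncomputable def phiTogliatti (x y z : ℂ) : Fin 6 → ℂ :=
  ![x ^ 2 * y, x ^ 2 * z, x * y ^ 2, y ^ 2 * z, x * z ^ 2, y * z ^ 2]

/-- The Togliatti toric ideal. -/
noncomputable def togI : Ideal (MvPolynomial (Fin 6) ℂ) :=
  Ideal.span
    ({X 2 * X 4 - X 0 * X 5,
      X 1 * X 3 - X 0 * X 5,
      X 3 * X 4 ^ 2 - X 1 * X 5 ^ 2,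
      X 0 * X 4 ^ 2 - X 1 ^ 2 * X 5,
      X 3 ^ 2 * X 4 - X 2 * X 5 ^ 2,
      X 0 * X 3 * X 4 - X 1 * X 2 * X 5,
      X 0 * X 3 ^ 2 - X 2 ^ 2 * X 5,
      X 1 * X 2 ^ 2 - X 0 ^ 2 * X 3,
      X 1 ^ 2 * X 2 - X 0 ^ 2 * X 4} :
      Set (MvPolynomial (Fin 6) ℂ))

/-- Exponent image under the monomial map. -/
noncomputable def AF (v : Fin 6 →₀ ℕ) : Fin 3 →₀ ℕ :=
  Finsupp.single 0 (2 * v 0 + 2 * v 1 + v 2 + v 4) +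
  Finsupp.single 1 (v 0 + 2 * v 2 + 2 * v 3 + v 5) +
  Finsupp.single 2 (v 1 + v 3 + 2 * v 4 + 2 * v 5)

lemma AF_apply0 (v : Fin 6 →₀ ℕ) : AF v 0 = 2 * v 0 + 2 * v 1 + v 2 + v 4 := by
  simp [AF, Finsupp.single_apply]

lemma AF_apply1 (v : Fin 6 →₀ ℕ) : AF v 1 = v 0 + 2 * v 2 + 2 * v 3 + v 5 := by
  simp [AF, Finsupp.single_apply]

lemma AF_apply2 (v : Fin 6 →₀ ℕ) : AF v 2 = v 1 + v 3 + 2 * v 4 + 2 * v 5 := by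
  simp [AF, Finsupp.single_apply]

/-- Standard (reduced) exponent vectors. -/
def StdE (v : Fin 6 →₀ ℕ) : Prop :=
  ¬(1 ≤ v 2 ∧ 1 ≤ v 4) ∧ ¬(1 ≤ v 1 ∧ 1 ≤ v 3) ∧ ¬(1 ≤ v 3 ∧ 2 ≤ v 4) ∧
  ¬(1 ≤ v 0 ∧ 2 ≤ v 4) ∧ ¬(2 ≤ v 3 ∧ 1 ≤ v 4) ∧ ¬(1 ≤ v 0 ∧ 1 ≤ v 3 ∧ 1 ≤ v 4) ∧
  ¬(1 ≤ v 0 ∧ 2 ≤ v 3) ∧ ¬(1 ≤ v 1 ∧ 2 ≤ v 2) ∧ ¬(2 ≤ v 1 ∧ 1 ≤ v 2)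

theorem stdCases (a0 a1 a2 a3 a4 : ℕ)
    (h1 : ¬(a2 ≥ 1 ∧ a4 ≥ 1)) (h2 : ¬(a1 ≥ 1 ∧ a3 ≥ 1))
    (h3 : ¬(a3 ≥ 1 ∧ a4 ≥ 2)) (h4 : ¬(a0 ≥ 1 ∧ a4 ≥ 2))
    (h5 : ¬(a3 ≥ 2 ∧ a4 ≥ 1)) (h6 : ¬(a0 ≥ 1 ∧ a3 ≥ 1 ∧ a4 ≥ 1))
    (h7 : ¬(a0 ≥ 1 ∧ a3 ≥ 2)) (h8 : ¬(a1 ≥ 1 ∧ a2 ≥ 2))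
    (h9 : ¬(a1 ≥ 2 ∧ a2 ≥ 1)) :
    (a3 = 0 ∧ a4 = 0 ∧ a1 = 0) ∨
    (a3 = 0 ∧ a4 = 0 ∧ a2 = 0) ∨
    (a3 = 0 ∧ a4 = 0 ∧ a1 = 1 ∧ a2 = 1) ∨
    (a3 = 0 ∧ a4 ≥ 1 ∧ a2 = 0 ∧ a0 = 0) ∨
    (a3 = 0 ∧ a4 = 1 ∧ a2 = 0 ∧ a0 ≥ 1) ∨
    (a3 ≥ 1 ∧ a4 = 0 ∧ a1 = 0 ∧ a0 = 0) ∨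
    (a3 = 1 ∧ a4 = 0 ∧ a1 = 0 ∧ a0 ≥ 1) ∨
    (a3 = 1 ∧ a4 = 1 ∧ a2 = 0 ∧ a1 = 0 ∧ a0 = 0) := by
  rcases Nat.eq_zero_or_pos a3 with h3z | h3p <;>
    rcases Nat.eq_zero_or_pos a4 with h4z | h4p
  · rcases Nat.eq_zero_or_pos a1 with h1z | h1p
    · clear h1 h2 h3 h4 h5 h6 h7 h8 h9; omega
    · rcases Nat.eq_zero_or_pos a2 with h2z | h2p
      · clear h1 h2 h3 h4 h5 h6 h7 h8 h9; omega
      · have k1 : ¬ a2 ≥ 2 := fun hh => h8 ⟨h1p, hh⟩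
        have k2 : ¬ a1 ≥ 2 := fun hh => h9 ⟨hh, h2p⟩
        clear h1 h2 h3 h4 h5 h6 h7 h8 h9; omega
  · have k1 : ¬ a2 ≥ 1 := fun hh => h1 ⟨hh, h4p⟩
    rcases Nat.eq_zero_or_pos a0 with h0z | h0p
    · clear h1 h2 h3 h4 h5 h6 h7 h8 h9; omega
    · have k2 : ¬ a4 ≥ 2 := fun hh => h4 ⟨h0p, hh⟩
      clear h1 h2 h3 h4 h5 h6 h7 h8 h9; omega
  · have k1 : ¬ a1 ≥ 1 := fun hh => h2 ⟨hh, h3p⟩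
    rcases Nat.eq_zero_or_pos a0 with h0z | h0p
    · clear h1 h2 h3 h4 h5 h6 h7 h8 h9; omega
    · have k2 : ¬ a3 ≥ 2 := fun hh => h7 ⟨h0p, hh⟩
      clear h1 h2 h3 h4 h5 h6 h7 h8 h9; omega
  · have k1 : ¬ a2 ≥ 1 := fun hh => h1 ⟨hh, h4p⟩
    have k2 : ¬ a1 ≥ 1 := fun hh => h2 ⟨hh, h3p⟩
    have k3 : ¬ a4 ≥ 2 := fun hh => h3 ⟨h3p, hh⟩
    have k4 : ¬ a3 ≥ 2 := fun hh => h5 ⟨hh, h4p⟩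
    have k5 : ¬ a0 ≥ 1 := fun hh => h6 ⟨hh, h3p, h4p⟩
    clear h1 h2 h3 h4 h5 h6 h7 h8 h9; omega

theorem stdInj (a0 a1 a2 a3 a4 a5 b0 b1 b2 b3 b4 b5 : ℕ)
    (ha1 : ¬(a2 ≥ 1 ∧ a4 ≥ 1)) (ha2 : ¬(a1 ≥ 1 ∧ a3 ≥ 1))
    (ha3 : ¬(a3 ≥ 1 ∧ a4 ≥ 2)) (ha4 : ¬(a0 ≥ 1 ∧ a4 ≥ 2))
    (ha5 : ¬(a3 ≥ 2 ∧ a4 ≥ 1)) (ha6 : ¬(a0 ≥ 1 ∧ a3 ≥ 1 ∧ a4 ≥ 1))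
    (ha7 : ¬(a0 ≥ 1 ∧ a3 ≥ 2)) (ha8 : ¬(a1 ≥ 1 ∧ a2 ≥ 2))
    (ha9 : ¬(a1 ≥ 2 ∧ a2 ≥ 1))
    (hb1 : ¬(b2 ≥ 1 ∧ b4 ≥ 1)) (hb2 : ¬(b1 ≥ 1 ∧ b3 ≥ 1))
    (hb3 : ¬(b3 ≥ 1 ∧ b4 ≥ 2)) (hb4 : ¬(b0 ≥ 1 ∧ b4 ≥ 2))
    (hb5 : ¬(b3 ≥ 2 ∧ b4 ≥ 1)) (hb6 : ¬(b0 ≥ 1 ∧ b3 ≥ 1 ∧ b4 ≥ 1))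
    (hb7 : ¬(b0 ≥ 1 ∧ b3 ≥ 2)) (hb8 : ¬(b1 ≥ 1 ∧ b2 ≥ 2))
    (hb9 : ¬(b1 ≥ 2 ∧ b2 ≥ 1))
    (hx : 2*a0+2*a1+a2+a4 = 2*b0+2*b1+b2+b4)
    (hy : a0+2*a2+2*a3+a5 = b0+2*b2+2*b3+b5)
    (hz : a1+a3+2*a4+2*a5 = b1+b3+2*b4+2*b5) :
    a0 = b0 ∧ a1 = b1 ∧ a2 = b2 ∧ a3 = b3 ∧ a4 = b4 ∧ a5 = b5 := by
  have ca := stdCases a0 a1 a2 a3 a4 ha1 ha2 ha3 ha4 ha5 ha6 ha7 ha8 ha9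
  have cb := stdCases b0 b1 b2 b3 b4 hb1 hb2 hb3 hb4 hb5 hb6 hb7 hb8 hb9
  clear ha1 ha2 ha3 ha4 ha5 ha6 ha7 ha8 ha9 hb1 hb2 hb3 hb4 hb5 hb6 hb7 hb8 hb9
  rcases ca with h|h|h|h|h|h|h|h <;> rcases cb with g|g|g|g|g|g|g|g <;> omega

lemma AF_injStd (a b : Fin 6 →₀ ℕ) (ha : StdE a) (hb : StdE b) (h : AF a = AF b) :
    a = b := by
  obtain ⟨ha1, ha2, ha3, ha4, ha5, ha6, ha7, ha8, ha9⟩ := ha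
  obtain ⟨hb1, hb2, hb3, hb4, hb5, hb6, hb7, hb8, hb9⟩ := hb
  have h0 := DFunLike.congr_fun h (0 : Fin 3)
  have h1 := DFunLike.congr_fun h (1 : Fin 3)
  have h2 := DFunLike.congr_fun h (2 : Fin 3)
  rw [AF_apply0, AF_apply0] at h0
  rw [AF_apply1, AF_apply1] at h1
  rw [AF_apply2, AF_apply2] at h2
  have := stdInj (a 0) (a 1) (a 2) (a 3) (a 4) (a 5) (b 0) (b 1) (b 2) (b 3) (b 4) (b 5)
    ha1 ha2 ha3 ha4 ha5 ha6 ha7 ha8 ha9 hb1 hb2 hb3 hb4 hb5 hb6 hb7 hb8 hb9 h0 h1 h2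
  ext i
  fin_cases i
  · exact this.1
  · exact this.2.1
  · exact this.2.2.1
  · exact this.2.2.2.1
  · exact this.2.2.2.2.1
  · exact this.2.2.2.2.2

/-- Termination measure. -/
def muT (v : Fin 6 →₀ ℕ) : ℕ := 2 * v 2 + 3 * v 3 + v 4

lemma X_eqm {σ : Type*} (i : σ) :
    (X i : MvPolynomial σ ℂ) = monomial (Finsupp.single i 1) 1 := by
  rw [← X_pow_eq_monomial, pow_one]

lemma key (v p q : Fin 6 →₀ ℕ) (hg : monomial p (1:ℂ) - monomial q 1 ∈ togI)
    (hle : p ≤ v) :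
    monomial v (1:ℂ) - monomial (v - p + q) 1 ∈ togI := by
  have e : monomial v (1:ℂ) - monomial (v - p + q) 1
      = monomial (v - p) 1 * (monomial p 1 - monomial q 1) := by
    rw [mul_sub, monomial_mul, monomial_mul, one_mul, tsub_add_cancel_of_le hle]
  rw [e]
  exact Ideal.mul_mem_left _ _ hg

lemma redStep (v p q : Fin 6 →₀ ℕ) (hle : p ≤ v) (hAF : AF p = AF q)
    (hmu : muT q < muT p) :
    muT (v - p + q) < muT v ∧ AF (v - p + q) = AF v := by
  have hpt : ∀ i, p i ≤ v i := Finsupp.le_def.mp hle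
  have hp0 := hpt 0; have hp1 := hpt 1; have hp2 := hpt 2
  have hp3 := hpt 3; have hp4 := hpt 4; have hp5 := hpt 5
  constructor
  · simp only [muT, Finsupp.add_apply, Finsupp.tsub_apply] at hmu ⊢
    omega
  · have hA0 := DFunLike.congr_fun hAF (0 : Fin 3)
    have hA1 := DFunLike.congr_fun hAF (1 : Fin 3)
    have hA2 := DFunLike.congr_fun hAF (2 : Fin 3)
    rw [AF_apply0, AF_apply0] at hA0
    rw [AF_apply1, AF_apply1] at hA1
    rw [AF_apply2, AF_apply2] at hA2
    have e0 : AF (v - p + q) 0 = AF v 0 := by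
      rw [AF_apply0, AF_apply0]
      simp only [Finsupp.add_apply, Finsupp.tsub_apply]
      omega
    have e1 : AF (v - p + q) 1 = AF v 1 := by
      rw [AF_apply1, AF_apply1]
      simp only [Finsupp.add_apply, Finsupp.tsub_apply]
      omega
    have e2 : AF (v - p + q) 2 = AF v 2 := by
      rw [AF_apply2, AF_apply2]
      simp only [Finsupp.add_apply, Finsupp.tsub_apply]
      omega
    ext j
    fin_cases j
    · exact e0
    · exact e1
    · exact e2

lemma gmem1 : monomial (Finsupp.single 2 1 + Finsupp.single 4 1) (1:ℂ) - monomial (Finsupp.single 0 1 + Finsupp.single 5 1) 1 ∈ togI := by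
  have h : (X 2 * X 4 - X 0 * X 5 : MvPolynomial (Fin 6) ℂ) ∈ togI := by
    unfold togI; exact Ideal.subset_span (by simp)
  simpa only [X_eqm, monomial_pow, one_pow, monomial_mul, one_mul, Finsupp.smul_single,
    smul_eq_mul, mul_one] using h

lemma gmem2 : monomial (Finsupp.single 1 1 + Finsupp.single 3 1) (1:ℂ) - monomial (Finsupp.single 0 1 + Finsupp.single 5 1) 1 ∈ togI := by
  have h : (X 1 * X 3 - X 0 * X 5 : MvPolynomial (Fin 6) ℂ) ∈ togI := by
    unfold togI; exact Ideal.subset_span (by simp)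
  simpa only [X_eqm, monomial_pow, one_pow, monomial_mul, one_mul, Finsupp.smul_single,
    smul_eq_mul, mul_one] using h

lemma gmem3 : monomial (Finsupp.single 3 1 + Finsupp.single 4 2) (1:ℂ) - monomial (Finsupp.single 1 1 + Finsupp.single 5 2) 1 ∈ togI := by
  have h : (X 3 * X 4 ^ 2 - X 1 * X 5 ^ 2 : MvPolynomial (Fin 6) ℂ) ∈ togI := by
    unfold togI; exact Ideal.subset_span (by simp)
  simpa only [X_eqm, monomial_pow, one_pow, monomial_mul, one_mul, Finsupp.smul_single,
    smul_eq_mul, mul_one] using h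

lemma gmem4 : monomial (Finsupp.single 0 1 + Finsupp.single 4 2) (1:ℂ) - monomial (Finsupp.single 1 2 + Finsupp.single 5 1) 1 ∈ togI := by
  have h : (X 0 * X 4 ^ 2 - X 1 ^ 2 * X 5 : MvPolynomial (Fin 6) ℂ) ∈ togI := by
    unfold togI; exact Ideal.subset_span (by simp)
  simpa only [X_eqm, monomial_pow, one_pow, monomial_mul, one_mul, Finsupp.smul_single,
    smul_eq_mul, mul_one] using h

lemma gmem5 : monomial (Finsupp.single 3 2 + Finsupp.single 4 1) (1:ℂ) - monomial (Finsupp.single 2 1 + Finsupp.single 5 2) 1 ∈ togI := by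
  have h : (X 3 ^ 2 * X 4 - X 2 * X 5 ^ 2 : MvPolynomial (Fin 6) ℂ) ∈ togI := by
    unfold togI; exact Ideal.subset_span (by simp)
  simpa only [X_eqm, monomial_pow, one_pow, monomial_mul, one_mul, Finsupp.smul_single,
    smul_eq_mul, mul_one] using h

lemma gmem6 : monomial (Finsupp.single 0 1 + Finsupp.single 3 1 + Finsupp.single 4 1) (1:ℂ) - monomial (Finsupp.single 1 1 + Finsupp.single 2 1 + Finsupp.single 5 1) 1 ∈ togI := by
  have h : (X 0 * X 3 * X 4 - X 1 * X 2 * X 5 : MvPolynomial (Fin 6) ℂ) ∈ togI := by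
    unfold togI; exact Ideal.subset_span (by simp)
  simpa only [X_eqm, monomial_pow, one_pow, monomial_mul, one_mul, Finsupp.smul_single,
    smul_eq_mul, mul_one] using h

lemma gmem7 : monomial (Finsupp.single 0 1 + Finsupp.single 3 2) (1:ℂ) - monomial (Finsupp.single 2 2 + Finsupp.single 5 1) 1 ∈ togI := by
  have h : (X 0 * X 3 ^ 2 - X 2 ^ 2 * X 5 : MvPolynomial (Fin 6) ℂ) ∈ togI := by
    unfold togI; exact Ideal.subset_span (by simp)
  simpa only [X_eqm, monomial_pow, one_pow, monomial_mul, one_mul, Finsupp.smul_single,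
    smul_eq_mul, mul_one] using h

lemma gmem8 : monomial (Finsupp.single 1 1 + Finsupp.single 2 2) (1:ℂ) - monomial (Finsupp.single 0 2 + Finsupp.single 3 1) 1 ∈ togI := by
  have h : (X 1 * X 2 ^ 2 - X 0 ^ 2 * X 3 : MvPolynomial (Fin 6) ℂ) ∈ togI := by
    unfold togI; exact Ideal.subset_span (by simp)
  simpa only [X_eqm, monomial_pow, one_pow, monomial_mul, one_mul, Finsupp.smul_single,
    smul_eq_mul, mul_one] using h

lemma gmem9 : monomial (Finsupp.single 1 2 + Finsupp.single 2 1) (1:ℂ) - monomial (Finsupp.single 0 2 + Finsupp.single 4 1) 1 ∈ togI := by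
  have h : (X 1 ^ 2 * X 2 - X 0 ^ 2 * X 4 : MvPolynomial (Fin 6) ℂ) ∈ togI := by
    unfold togI; exact Ideal.subset_span (by simp)
  simpa only [X_eqm, monomial_pow, one_pow, monomial_mul, one_mul, Finsupp.smul_single,
    smul_eq_mul, mul_one] using h

lemma caseStep (n : ℕ)
    (ih : ∀ v : Fin 6 →₀ ℕ, muT v ≤ n →
      ∃ w, StdE w ∧ AF w = AF v ∧ monomial v (1:ℂ) - monomial w 1 ∈ togI)
    (v p q : Fin 6 →₀ ℕ) (hv : muT v ≤ n + 1)
    (hg : monomial p (1:ℂ) - monomial q 1 ∈ togI)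
    (hle : p ≤ v) (hAF : AF p = AF q) (hmu : muT q < muT p) :
    ∃ w, StdE w ∧ AF w = AF v ∧ monomial v (1:ℂ) - monomial w 1 ∈ togI := by
  obtain ⟨hlt, hAFeq⟩ := redStep v p q hle hAF hmu
  obtain ⟨w, hw, hAFw, hmemw⟩ := ih (v - p + q) (by omega)
  refine ⟨w, hw, hAFw.trans hAFeq, ?_⟩
  have h1 := key v p q hg hle
  have h2 := Ideal.add_mem _ h1 hmemw
  rwa [sub_add_sub_cancel] at h2

theorem togReduce : ∀ (n : ℕ) (v : Fin 6 →₀ ℕ), muT v ≤ n →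
    ∃ w, StdE w ∧ AF w = AF v ∧ monomial v (1:ℂ) - monomial w 1 ∈ togI := by
  intro n
  induction n with
  | zero =>
    intro v hv
    simp only [muT] at hv
    exact ⟨v, by unfold StdE; omega, rfl, by simp⟩
  | succ n ih =>
    intro v hv
    by_cases c1 : 1 ≤ v 2 ∧ 1 ≤ v 4
    · exact caseStep n ih v _ _ hv gmem1
        (by rw [Finsupp.le_def]; intro i; fin_cases i <;> simp [Finsupp.single_apply] <;> omega)
        (by ext j; fin_cases j <;>
          simp [AF_apply0, AF_apply1, AF_apply2, Finsupp.add_apply, Finsupp.single_apply])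
        (by simp only [muT, Finsupp.add_apply, Finsupp.single_apply]; decide)
    by_cases c2 : 1 ≤ v 1 ∧ 1 ≤ v 3
    · exact caseStep n ih v _ _ hv gmem2
        (by rw [Finsupp.le_def]; intro i; fin_cases i <;> simp [Finsupp.single_apply] <;> omega)
        (by ext j; fin_cases j <;>
          simp [AF_apply0, AF_apply1, AF_apply2, Finsupp.add_apply, Finsupp.single_apply])
        (by simp only [muT, Finsupp.add_apply, Finsupp.single_apply]; decide)
    by_cases c3 : 1 ≤ v 3 ∧ 2 ≤ v 4
    · exact caseStep n ih v _ _ hv gmem3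
        (by rw [Finsupp.le_def]; intro i; fin_cases i <;> simp [Finsupp.single_apply] <;> omega)
        (by ext j; fin_cases j <;>
          simp [AF_apply0, AF_apply1, AF_apply2, Finsupp.add_apply, Finsupp.single_apply])
        (by simp only [muT, Finsupp.add_apply, Finsupp.single_apply]; decide)
    by_cases c4 : 1 ≤ v 0 ∧ 2 ≤ v 4
    · exact caseStep n ih v _ _ hv gmem4
        (by rw [Finsupp.le_def]; intro i; fin_cases i <;> simp [Finsupp.single_apply] <;> omega)
        (by ext j; fin_cases j <;>
          simp [AF_apply0, AF_apply1, AF_apply2, Finsupp.add_apply, Finsupp.single_apply])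
        (by simp only [muT, Finsupp.add_apply, Finsupp.single_apply]; decide)
    by_cases c5 : 2 ≤ v 3 ∧ 1 ≤ v 4
    · exact caseStep n ih v _ _ hv gmem5
        (by rw [Finsupp.le_def]; intro i; fin_cases i <;> simp [Finsupp.single_apply] <;> omega)
        (by ext j; fin_cases j <;>
          simp [AF_apply0, AF_apply1, AF_apply2, Finsupp.add_apply, Finsupp.single_apply])
        (by simp only [muT, Finsupp.add_apply, Finsupp.single_apply]; decide)
    by_cases c6 : 1 ≤ v 0 ∧ 1 ≤ v 3 ∧ 1 ≤ v 4
    · exact caseStep n ih v _ _ hv gmem6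
        (by rw [Finsupp.le_def]; intro i; fin_cases i <;> simp [Finsupp.single_apply] <;> omega)
        (by ext j; fin_cases j <;>
          simp [AF_apply0, AF_apply1, AF_apply2, Finsupp.add_apply, Finsupp.single_apply])
        (by simp only [muT, Finsupp.add_apply, Finsupp.single_apply]; decide)
    by_cases c7 : 1 ≤ v 0 ∧ 2 ≤ v 3
    · exact caseStep n ih v _ _ hv gmem7
        (by rw [Finsupp.le_def]; intro i; fin_cases i <;> simp [Finsupp.single_apply] <;> omega)
        (by ext j; fin_cases j <;>
          simp [AF_apply0, AF_apply1, AF_apply2, Finsupp.add_apply, Finsupp.single_apply])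
        (by simp only [muT, Finsupp.add_apply, Finsupp.single_apply]; decide)
    by_cases c8 : 1 ≤ v 1 ∧ 2 ≤ v 2
    · exact caseStep n ih v _ _ hv gmem8
        (by rw [Finsupp.le_def]; intro i; fin_cases i <;> simp [Finsupp.single_apply] <;> omega)
        (by ext j; fin_cases j <;>
          simp [AF_apply0, AF_apply1, AF_apply2, Finsupp.add_apply, Finsupp.single_apply])
        (by simp only [muT, Finsupp.add_apply, Finsupp.single_apply]; decide)
    by_cases c9 : 2 ≤ v 1 ∧ 1 ≤ v 2
    · exact caseStep n ih v _ _ hv gmem9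
        (by rw [Finsupp.le_def]; intro i; fin_cases i <;> simp [Finsupp.single_apply] <;> omega)
        (by ext j; fin_cases j <;>
          simp [AF_apply0, AF_apply1, AF_apply2, Finsupp.add_apply, Finsupp.single_apply])
        (by simp only [muT, Finsupp.add_apply, Finsupp.single_apply]; decide)
    exact ⟨v, ⟨c1, c2, c3, c4, c5, c6, c7, c8, c9⟩, rfl, by simp⟩

/-- The monomial substitution u_i ↦ corresponding monomial in x,y,z. -/
noncomputable def subT : Fin 6 → MvPolynomial (Fin 3) ℂ :=
  ![X 0 ^ 2 * X 1, X 0 ^ 2 * X 2, X 0 * X 1 ^ 2, X 1 ^ 2 * X 2, X 0 * X 2 ^ 2, X 1 * X 2 ^ 2]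

noncomputable def PsiT : MvPolynomial (Fin 6) ℂ →ₐ[ℂ] MvPolynomial (Fin 3) ℂ :=
  aeval subT

lemma AF_zero : AF 0 = 0 := by
  ext j
  fin_cases j <;> simp [AF_apply0, AF_apply1, AF_apply2]

lemma AF_add (a b : Fin 6 →₀ ℕ) : AF (a + b) = AF a + AF b := by
  ext j
  fin_cases j <;>
    simp [AF_apply0, AF_apply1, AF_apply2, Finsupp.add_apply] <;> ring

lemma subT_eq0 : subT 0 = monomial (Finsupp.single 0 2 + Finsupp.single 1 1) 1 := by
  show (X 0 ^ 2 * X 1 : MvPolynomial (Fin 3) ℂ) = _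
  simp only [X_eqm, monomial_pow, one_pow, monomial_mul, one_mul, Finsupp.smul_single,
    smul_eq_mul, mul_one]

lemma subT_eq1 : subT 1 = monomial (Finsupp.single 0 2 + Finsupp.single 2 1) 1 := by
  show (X 0 ^ 2 * X 2 : MvPolynomial (Fin 3) ℂ) = _
  simp only [X_eqm, monomial_pow, one_pow, monomial_mul, one_mul, Finsupp.smul_single,
    smul_eq_mul, mul_one]

lemma subT_eq2 : subT 2 = monomial (Finsupp.single 0 1 + Finsupp.single 1 2) 1 := by
  show (X 0 * X 1 ^ 2 : MvPolynomial (Fin 3) ℂ) = _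
  simp only [X_eqm, monomial_pow, one_pow, monomial_mul, one_mul, Finsupp.smul_single,
    smul_eq_mul, mul_one]

lemma subT_eq3 : subT 3 = monomial (Finsupp.single 1 2 + Finsupp.single 2 1) 1 := by
  show (X 1 ^ 2 * X 2 : MvPolynomial (Fin 3) ℂ) = _
  simp only [X_eqm, monomial_pow, one_pow, monomial_mul, one_mul, Finsupp.smul_single,
    smul_eq_mul, mul_one]

lemma subT_eq4 : subT 4 = monomial (Finsupp.single 0 1 + Finsupp.single 2 2) 1 := by
  show (X 0 * X 2 ^ 2 : MvPolynomial (Fin 3) ℂ) = _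
  simp only [X_eqm, monomial_pow, one_pow, monomial_mul, one_mul, Finsupp.smul_single,
    smul_eq_mul, mul_one]

lemma subT_eq5 : subT 5 = monomial (Finsupp.single 1 1 + Finsupp.single 2 2) 1 := by
  show (X 1 * X 2 ^ 2 : MvPolynomial (Fin 3) ℂ) = _
  simp only [X_eqm, monomial_pow, one_pow, monomial_mul, one_mul, Finsupp.smul_single,
    smul_eq_mul, mul_one]

lemma Psi_X_pow (i : Fin 6) (n : ℕ) :
    PsiT (X i ^ n) = monomial (AF (Finsupp.single i n)) 1 := by
  rw [map_pow, show PsiT (X i) = subT i from aeval_X subT i]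
  fin_cases i
  · show subT 0 ^ n = monomial (AF (Finsupp.single 0 n)) 1
    rw [subT_eq0, monomial_pow, one_pow]
    have he : n • (Finsupp.single 0 2 + Finsupp.single 1 1 : Fin 3 →₀ ℕ)
        = AF (Finsupp.single 0 n) := by
      ext j
      fin_cases j <;>
        simp [AF_apply0, AF_apply1, AF_apply2, Finsupp.add_apply, Finsupp.single_apply,
          Finsupp.smul_apply, smul_eq_mul, mul_ite] <;> ring
    rw [he]
  · show subT 1 ^ n = monomial (AF (Finsupp.single 1 n)) 1
    rw [subT_eq1, monomial_pow, one_pow]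
    have he : n • (Finsupp.single 0 2 + Finsupp.single 2 1 : Fin 3 →₀ ℕ)
        = AF (Finsupp.single 1 n) := by
      ext j
      fin_cases j <;>
        simp [AF_apply0, AF_apply1, AF_apply2, Finsupp.add_apply, Finsupp.single_apply,
          Finsupp.smul_apply, smul_eq_mul, mul_ite] <;> ring
    rw [he]
  · show subT 2 ^ n = monomial (AF (Finsupp.single 2 n)) 1
    rw [subT_eq2, monomial_pow, one_pow]
    have he : n • (Finsupp.single 0 1 + Finsupp.single 1 2 : Fin 3 →₀ ℕ)
        = AF (Finsupp.single 2 n) := by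
      ext j
      fin_cases j <;>
        simp [AF_apply0, AF_apply1, AF_apply2, Finsupp.add_apply, Finsupp.single_apply,
          Finsupp.smul_apply, smul_eq_mul, mul_ite] <;> ring
    rw [he]
  · show subT 3 ^ n = monomial (AF (Finsupp.single 3 n)) 1
    rw [subT_eq3, monomial_pow, one_pow]
    have he : n • (Finsupp.single 1 2 + Finsupp.single 2 1 : Fin 3 →₀ ℕ)
        = AF (Finsupp.single 3 n) := by
      ext j
      fin_cases j <;>
        simp [AF_apply0, AF_apply1, AF_apply2, Finsupp.add_apply, Finsupp.single_apply,
          Finsupp.smul_apply, smul_eq_mul, mul_ite] <;> ring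
    rw [he]
  · show subT 4 ^ n = monomial (AF (Finsupp.single 4 n)) 1
    rw [subT_eq4, monomial_pow, one_pow]
    have he : n • (Finsupp.single 0 1 + Finsupp.single 2 2 : Fin 3 →₀ ℕ)
        = AF (Finsupp.single 4 n) := by
      ext j
      fin_cases j <;>
        simp [AF_apply0, AF_apply1, AF_apply2, Finsupp.add_apply, Finsupp.single_apply,
          Finsupp.smul_apply, smul_eq_mul, mul_ite] <;> ring
    rw [he]
  · show subT 5 ^ n = monomial (AF (Finsupp.single 5 n)) 1
    rw [subT_eq5, monomial_pow, one_pow]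
    have he : n • (Finsupp.single 1 1 + Finsupp.single 2 2 : Fin 3 →₀ ℕ)
        = AF (Finsupp.single 5 n) := by
      ext j
      fin_cases j <;>
        simp [AF_apply0, AF_apply1, AF_apply2, Finsupp.add_apply, Finsupp.single_apply,
          Finsupp.smul_apply, smul_eq_mul, mul_ite] <;> ring
    rw [he]

lemma Psi_monomial (v : Fin 6 →₀ ℕ) (c : ℂ) :
    PsiT (monomial v c) = monomial (AF v) c := by
  induction v using Finsupp.induction with
  | zero =>
    rw [show (monomial (0 : Fin 6 →₀ ℕ) c) = C c from by rw [monomial_zero'],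
      show (monomial (AF 0) c) = C c from by rw [AF_zero, monomial_zero']]
    simp [PsiT]
  | single_add i n f hif hn ih =>
    rw [monomial_single_add, map_mul, Psi_X_pow, ih, monomial_mul, one_mul, AF_add]

lemma vec6_apply5 {α : Type*} (a b c d e f : α) : ![a, b, c, d, e, f] 5 = f := rfl

lemma togI_le_ker : togI ≤ RingHom.ker (PsiT : MvPolynomial (Fin 6) ℂ →ₐ[ℂ] _).toRingHom := by
  unfold togI
  rw [Ideal.span_le]
  intro g hg
  simp only [Set.mem_insert_iff, Set.mem_singleton_iff] at hg
  have hsub : ∀ i : Fin 6, PsiT (X i) = subT i := aeval_X subT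
  rcases hg with rfl | rfl | rfl | rfl | rfl | rfl | rfl | rfl | rfl <;>
    · rw [SetLike.mem_coe, RingHom.mem_ker]
      show PsiT _ = 0
      simp only [map_sub, map_mul, map_pow, hsub, subT, Matrix.cons_val_zero,
        Matrix.cons_val_one, Matrix.head_cons, Matrix.cons_val_two, Matrix.tail_cons,
        Matrix.cons_val_three, Matrix.cons_val_four, Matrix.cons_val_fin_one, vec6_apply5]
      ring

lemma eval_phi (x y z : ℂ) (F : MvPolynomial (Fin 6) ℂ) :
    eval (phiTogliatti x y z) F = eval ![x, y, z] (PsiT F) := by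
  induction F using MvPolynomial.induction_on with
  | C a => simp [PsiT]
  | add p q hp hq => simp [map_add, hp, hq]
  | mul_X p i hp =>
    simp only [map_mul, eval_mul]
    rw [hp]
    congr 1
    rw [show PsiT (X i) = subT i from aeval_X subT i, eval_X]
    fin_cases i <;> simp [subT, phiTogliatti, vec6_apply5] <;> ring

/-- The vanishing ideal of the image of φ : ℂ³ → ℂ⁶, i.e. the homogeneous ideal
of the affine cone over the Togliatti surface X_T ⊂ ℙ⁵, is generated by the nine
polynomials u₂u₄ − u₀u₅, u₁u₃ − u₀u₅, u₃u₄² − u₁u₅², u₀u₄² − u₁²u₅,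
u₃²u₄ − u₂u₅², u₀u₃u₄ − u₁u₂u₅, u₀u₃² − u₂²u₅, u₁u₂² − u₀²u₃, u₁²u₂ − u₀²u₄. -/
theorem togliatti_surface_ideal (F : MvPolynomial (Fin 6) ℂ) :
    (∀ x y z : ℂ, eval (phiTogliatti x y z) F = 0) ↔
      F ∈ Ideal.span
        ({X 2 * X 4 - X 0 * X 5,
          X 1 * X 3 - X 0 * X 5,
          X 3 * X 4 ^ 2 - X 1 * X 5 ^ 2,
          X 0 * X 4 ^ 2 - X 1 ^ 2 * X 5,
          X 3 ^ 2 * X 4 - X 2 * X 5 ^ 2,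
          X 0 * X 3 * X 4 - X 1 * X 2 * X 5,
          X 0 * X 3 ^ 2 - X 2 ^ 2 * X 5,
          X 1 * X 2 ^ 2 - X 0 ^ 2 * X 3,
          X 1 ^ 2 * X 2 - X 0 ^ 2 * X 4} :
          Set (MvPolynomial (Fin 6) ℂ)) := by
  constructor
  · intro h
    show F ∈ togI
    choose red hstd hAFr hmem using
      (fun v : Fin 6 →₀ ℕ => togReduce (muT v) v le_rfl)
    set R : MvPolynomial (Fin 6) ℂ :=
      ∑ v ∈ F.support, monomial (red v) (coeff v F) with hRdef
    have hFR : F - R ∈ togI := by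
      have hsum : F - R = ∑ v ∈ F.support,
          (monomial v (coeff v F) - monomial (red v) (coeff v F)) := by
        rw [Finset.sum_sub_distrib, support_sum_monomial_coeff]
      rw [hsum]
      refine Ideal.sum_mem _ fun v hv => ?_
      have e : monomial v (coeff v F) - monomial (red v) (coeff v F)
          = C (coeff v F) * (monomial v 1 - monomial (red v) 1) := by
        rw [mul_sub, C_mul_monomial, C_mul_monomial, mul_one]
      rw [e]
      exact Ideal.mul_mem_left _ _ (hmem v)
    have hPsiF : PsiT F = 0 := by
      apply MvPolynomial.funext
      intro pt
      have hpt : pt = ![pt 0, pt 1, pt 2] := by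
        funext i; fin_cases i <;> rfl
      rw [map_zero, hpt, ← eval_phi]
      exact h _ _ _
    have hPsiR : PsiT R = 0 := by
      have h1 : PsiT (F - R) = 0 := RingHom.mem_ker.mp (togI_le_ker hFR)
      rw [map_sub, hPsiF, zero_sub, neg_eq_zero] at h1
      exact h1
    have hR0 : R = 0 := by
      apply MvPolynomial.ext
      intro w
      rw [coeff_zero]
      have hcR : coeff w R = ∑ v ∈ F.support, if red v = w then coeff v F else 0 := by
        rw [hRdef, coeff_sum]
        exact Finset.sum_congr rfl fun v _ => coeff_monomial w (red v) (coeff v F)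
      by_cases hw : StdE w
      · have hPR : PsiT R = ∑ v ∈ F.support, monomial (AF (red v)) (coeff v F) := by
          rw [hRdef, map_sum]
          exact Finset.sum_congr rfl fun v _ => Psi_monomial (red v) (coeff v F)
        have hcPsi : coeff (AF w) (PsiT R)
            = ∑ v ∈ F.support, if red v = w then coeff v F else 0 := by
          rw [hPR, coeff_sum]
          refine Finset.sum_congr rfl fun v _ => ?_
          rw [coeff_monomial]
          refine if_congr ⟨fun hh => AF_injStd _ _ (hstd v) hw hh, fun hh => by rw [hh]⟩ rfl rfl
        rw [hcR, ← hcPsi, hPsiR, coeff_zero]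
      · rw [hcR]
        refine Finset.sum_eq_zero fun v _ => ?_
        exact if_neg fun (hh : red v = w) => hw (hh ▸ hstd v)
    have hFeq : F = (F - R) + R := by ring
    rw [hFeq]
    exact Ideal.add_mem _ hFR (hR0 ▸ Ideal.zero_mem _)
  · intro hF x y z
    have hker : togI ≤ RingHom.ker (eval (phiTogliatti x y z)) := by
      unfold togI
      rw [Ideal.span_le]
      intro g hg
      simp only [Set.mem_insert_iff, Set.mem_singleton_iff] at hg
      rcases hg with rfl | rfl | rfl | rfl | rfl | rfl | rfl | rfl | rfl <;>
        · rw [SetLike.mem_coe, RingHom.mem_ker]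
          simp only [map_sub, map_mul, map_pow, eval_X, phiTogliatti,
            Matrix.cons_val_zero, Matrix.cons_val_one, Matrix.head_cons, Matrix.cons_val_two,
            Matrix.tail_cons, Matrix.cons_val_three, Matrix.cons_val_four,
            Matrix.cons_val_fin_one, vec6_apply5]
          ring
    exact RingHom.mem_ker.mp (hker hF)
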